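/- Let κ be an epsilon number that is an uncountable regular cardinal and σ < κ an epsilon number. Then the map t ↦ t[κ := σ] is an order-isomorphism from M(κ, σ) ∩ [κ, κ⁺) onto [σ, σ⁺); consequently the cardinality of M(κ, σ) ∩ [κ, κ⁺) equals the cardinality of [σ, σ⁺), which is strictly less than κ. -/

import Mathlib

open Ordinal

def IsEps (x : Ordinal.{0}) : Prop := omega0 ^ x = x

noncomputable def nextEps (x : Ordinal.{0}) : Ordinal.{0} := sInf {e | IsEps e ∧ x < e}

inductive InEp : Ordinal.{0} → Ordinal.{0} → Prop
  | self (x : Ordinal.{0}) (h : omega0 ^ x = x) : InEp x x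
  | exp (x e c y : Ordinal.{0}) (h : omega0 ^ x ≠ x) (hm : (e, c) ∈ CNF omega0 x)
      (hy : InEp y e) : InEp y x

/-- The set of epsilon numbers appearing in the iterated Cantor normal form of `x`. -/
def Ep (x : Ordinal.{0}) : Set Ordinal.{0} := {y | InEp y x}

/-- Substitution of the epsilon number `α` by the epsilon number `e` in the
iterated Cantor normal form of `x`. -/
noncomputable def subst (α e : Ordinal.{0}) (x : Ordinal.{0}) : Ordinal.{0} :=
  if h : omega0 ^ x = x then (if x = α then e else x)
  else ((CNF omega0 x).attach.map (fun p => omega0 ^ (subst α e p.1.1) * p.1.2)).sum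
termination_by x
decreasing_by
  have hx0 : x ≠ 0 := by
    rintro rfl
    have := p.2
    simp [Ordinal.CNF.zero_right] at this
  have hle := Ordinal.CNF.fst_le_log p.2
  have hlt : Ordinal.log omega0 x < x := by
    have h1 : x < omega0 ^ x :=
      lt_of_le_of_ne (Ordinal.right_le_opow x one_lt_omega0) (Ne.symm h)
    exact (Ordinal.lt_opow_iff_log_lt one_lt_omega0 hx0).mp h1
  exact lt_of_le_of_lt hle hlt

def MSet (α e : Ordinal.{0}) : Set Ordinal.{0} :=
  {q | q < nextEps α ∧ Ep q ∩ Set.Iio α ⊆ Set.Iio e}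

/-! ### Auxiliary lemmas -/

section Aux

lemma eps_pos {x : Ordinal.{0}} (h : IsEps x) : 0 < x := by
  rw [← h]; exact opow_pos x omega0_pos

lemma eps_ne_zero {x : Ordinal.{0}} (h : IsEps x) : x ≠ 0 := (eps_pos h).ne'

lemma inEp_isEps {y x : Ordinal.{0}} (h : InEp y x) : IsEps y := by
  induction h with
  | self x h => exact h
  | exp x e c y h hm hy ih => exact ih

lemma not_inEp_zero {y : Ordinal.{0}} (h : InEp y 0) : False := by
  cases h with
  | self _ h' => simp [opow_zero] at h'
  | exp _ e c _ _ hm _ => rw [CNF.zero_right] at hm; exact (List.not_mem_nil hm)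

lemma log_of_eps {x : Ordinal.{0}} (h : IsEps x) : log omega0 x = x := by
  conv_lhs => rw [← h]
  exact log_opow one_lt_omega0 x

lemma lt_omega0_opow_self {x : Ordinal.{0}} (h : ¬ (omega0 ^ x = x)) : x < omega0 ^ x :=
  lt_of_le_of_ne (right_le_opow x one_lt_omega0) fun hh => h hh.symm

lemma log_lt_self {x : Ordinal.{0}} (h : ¬ (omega0 ^ x = x)) (hx : x ≠ 0) :
    log omega0 x < x :=
  (lt_opow_iff_log_lt one_lt_omega0 hx).mp (lt_omega0_opow_self h)

lemma inEp_le {y x : Ordinal.{0}} (h : InEp y x) : y ≤ x := by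
  induction h with
  | self x h => exact le_rfl
  | exp x e c y h hm hy ih =>
    exact ih.trans ((CNF.fst_le_log hm).trans (log_le_self _ _))

lemma inEp_eps_iff {x y : Ordinal.{0}} (h : IsEps x) : InEp y x ↔ y = x := by
  constructor
  · intro hy
    cases hy with
    | self => rfl
    | exp _ e c _ hne => exact absurd h hne
  · rintro rfl; exact InEp.self _ h

lemma inEp_of_not_eps {x y : Ordinal.{0}} (h : ¬ (omega0 ^ x = x)) (hy : InEp y x) :
    ∃ e c, (e, c) ∈ CNF omega0 x ∧ InEp y e := by
  cases hy with
  | self _ h' => exact absurd h' h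
  | exp _ e c _ _ hm hy => exact ⟨e, c, hm, hy⟩

lemma CNF_of_eps {x : Ordinal.{0}} (h : IsEps x) : CNF omega0 x = [(x, 1)] := by
  have hx : x ≠ 0 := eps_ne_zero h
  rw [CNF.ne_zero hx, log_of_eps h, h, Ordinal.div_self hx, Ordinal.mod_self, CNF.zero_right]

lemma head_mem_CNF {x : Ordinal.{0}} (hx : x ≠ 0) :
    (log omega0 x, x / omega0 ^ log omega0 x) ∈ CNF omega0 x := by
  rw [CNF.ne_zero hx]; exact List.mem_cons_self

lemma inEp_mod {x y : Ordinal.{0}} (h : ¬ (omega0 ^ x = x)) (hx : x ≠ 0)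
    (hy : InEp y (x % omega0 ^ log omega0 x)) : InEp y x := by
  set r := x % omega0 ^ log omega0 x with hrdef
  by_cases hre : omega0 ^ r = r
  · rw [inEp_eps_iff hre] at hy
    subst hy
    have hmem : (r, 1) ∈ CNF omega0 x := by
      rw [CNF.ne_zero hx, ← hrdef]
      exact List.mem_cons_of_mem _ (by rw [CNF_of_eps hre]; exact List.mem_cons_self)
    exact InEp.exp x r 1 r h hmem (InEp.self r hre)
  · obtain ⟨e, c, hm, he⟩ := inEp_of_not_eps hre hy
    have hmem : (e, c) ∈ CNF omega0 x := by
      rw [CNF.ne_zero hx]; exact List.mem_cons_of_mem _ hm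
    exact InEp.exp x e c y h hmem he

/-- `nextEps` facts -/
lemma nextEps_spec (x : Ordinal.{0}) : IsEps (nextEps x) ∧ x < nextEps x := by
  have hne : {e : Ordinal.{0} | IsEps e ∧ x < e}.Nonempty := by
    refine ⟨nfp (omega0 ^ ·) (x + 1), ?_, ?_⟩
    · exact Ordinal.nfp_fp (isNormal_opow one_lt_omega0) _
    · exact (lt_add_one x).trans_le (le_nfp _ _)
  exact csInf_mem hne

lemma nextEps_isEps (x : Ordinal.{0}) : IsEps (nextEps x) := (nextEps_spec x).1

lemma lt_nextEps (x : Ordinal.{0}) : x < nextEps x := (nextEps_spec x).2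

lemma nextEps_le {x e : Ordinal.{0}} (he : IsEps e) (hxe : x < e) : nextEps x ≤ e :=
  csInf_le' ⟨he, hxe⟩

lemma eps_le_of_lt_nextEps {a y : Ordinal.{0}} (hy : IsEps y) (h : y < nextEps a) : y ≤ a :=
  not_lt.mp fun hlt => (nextEps_le hy hlt).not_gt h

/-- If all members of `Ep x` are `< ε` with `ε` an epsilon number, then `x < ε`. -/
lemma lt_of_Ep_lt {ε : Ordinal.{0}} (hε : IsEps ε) :
    ∀ x : Ordinal.{0}, (∀ y, InEp y x → y < ε) → x < ε := by
  intro x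
  induction x using Ordinal.induction with
  | _ x IH =>
    intro hsub
    by_cases h : omega0 ^ x = x
    · exact hsub x (InEp.self x h)
    · rcases eq_or_ne x 0 with rfl | hx
      · exact eps_pos hε
      · have hlog : log omega0 x < ε := by
          refine IH (log omega0 x) (log_lt_self h hx) fun y hy => ?_
          exact hsub y (InEp.exp x _ _ y h (head_mem_CNF hx) hy)
        calc x < omega0 ^ Order.succ (log omega0 x) := lt_opow_succ_log_self one_lt_omega0 x
          _ ≤ omega0 ^ ε := opow_le_opow_right omega0_pos (Order.succ_le_of_lt hlog)
          _ = ε := hε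

/-! ### Basic `subst` lemmas -/

lemma subst_eps {α β x : Ordinal.{0}} (h : IsEps x) :
    subst α β x = if x = α then β else x := by
  rw [subst]; exact dif_pos h

lemma subst_zero (α β : Ordinal.{0}) : subst α β 0 = 0 := by
  rw [subst]
  have h : ¬ (omega0 ^ (0 : Ordinal.{0}) = 0) := by simp
  rw [dif_neg h, CNF.zero_right]
  simp

lemma subst_of_not_eps {α β x : Ordinal.{0}} (h : ¬ (omega0 ^ x = x)) :
    subst α β x = ((CNF omega0 x).map fun p => omega0 ^ (subst α β p.1) * p.2).sum := by
  rw [subst, dif_neg h]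
  congr 1
  exact List.attach_map_val (l := CNF omega0 x) (f := fun p => omega0 ^ (subst α β p.1) * p.2)

lemma subst_formula {α β : Ordinal.{0}} (hβ : IsEps β) (x : Ordinal.{0}) :
    subst α β x = ((CNF omega0 x).map fun p => omega0 ^ (subst α β p.1) * p.2).sum := by
  by_cases h : omega0 ^ x = x
  · rw [CNF_of_eps h]
    simp only [List.map_cons, List.map_nil, List.sum_cons, List.sum_nil, add_zero, mul_one]
    rw [subst_eps h]
    split_ifs with h'
    · exact hβ.symm
    · exact h.symm
  · exact subst_of_not_eps h

lemma subst_decomp {α β : Ordinal.{0}} (hβ : IsEps β) {x : Ordinal.{0}} (hx : x ≠ 0) :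
    subst α β x =
      omega0 ^ (subst α β (log omega0 x)) * (x / omega0 ^ log omega0 x)
        + subst α β (x % omega0 ^ log omega0 x) := by
  rw [subst_formula hβ x, CNF.ne_zero hx, List.map_cons, List.sum_cons,
    ← subst_formula hβ]

lemma subst_pos {α β : Ordinal.{0}} (hβ : IsEps β) {x : Ordinal.{0}} (hx : x ≠ 0) :
    0 < subst α β x := by
  rw [subst_decomp hβ hx]
  refine lt_of_lt_of_le ?_ (le_self_add)
  exact mul_pos (opow_pos _ omega0_pos) (div_opow_log_pos omega0 hx)

lemma le_listSum_of_mem : ∀ {l : List Ordinal.{0}} {a : Ordinal.{0}}, a ∈ l → a ≤ l.sum := by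
  intro l
  induction l with
  | nil => intro a ha; exact absurd ha List.not_mem_nil
  | cons b l ih =>
    intro a ha
    rw [List.sum_cons]
    rcases List.mem_cons.mp ha with rfl | ha
    · exact le_self_add
    · exact (ih ha).trans (le_add_self)

lemma subst_ge {α β : Ordinal.{0}} (hβ : IsEps β) :
    ∀ x : Ordinal.{0}, InEp α x → β ≤ subst α β x := by
  intro x
  induction x using Ordinal.induction with
  | _ x IH =>
    intro hin
    by_cases h : omega0 ^ x = x
    · rw [inEp_eps_iff h] at hin
      rw [subst_eps h, if_pos hin.symm]
    · obtain ⟨e, c, hm, he⟩ := inEp_of_not_eps h hin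
      have hx0 : x ≠ 0 := by rintro rfl; rw [CNF.zero_right] at hm; exact (List.not_mem_nil hm)
      have he' : e < x := ((CNF.fst_le_log hm).trans_lt (log_lt_self h hx0))
      have hb := IH e he' he
      rw [subst_formula hβ x]
      have hterm : omega0 ^ (subst α β e) * c ∈
          (CNF omega0 x).map fun p => omega0 ^ (subst α β p.1) * p.2 := by
        have := List.mem_map_of_mem (f := fun p : Ordinal × Ordinal =>
          omega0 ^ (subst α β p.1) * p.2) hm
        exact this
      refine le_trans ?_ (le_listSum_of_mem hterm)
      calc β = omega0 ^ β := hβ.symm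
        _ ≤ omega0 ^ (subst α β e) := opow_le_opow_right omega0_pos hb
        _ ≤ omega0 ^ (subst α β e) * c := Ordinal.le_mul_left _ (CNF.snd_pos hm)

lemma subst_eq_self {α β : Ordinal.{0}} (hβ : IsEps β) :
    ∀ x : Ordinal.{0}, ¬ InEp α x → subst α β x = x := by
  intro x
  induction x using Ordinal.induction with
  | _ x IH =>
    intro hn
    by_cases h : omega0 ^ x = x
    · rw [subst_eps h, if_neg]
      rintro rfl
      exact hn (InEp.self x h)
    · rcases eq_or_ne x 0 with rfl | hx
      · exact subst_zero α β
      · rw [subst_decomp hβ hx]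
        have h1 : subst α β (log omega0 x) = log omega0 x :=
          IH _ (log_lt_self h hx) fun hc =>
            hn (InEp.exp x _ _ α h (head_mem_CNF hx) hc)
        have hmlt : x % omega0 ^ log omega0 x < x :=
          (mod_lt x (opow_ne_zero _ omega0_ne_zero)).trans_le (opow_log_le_self omega0 hx)
        have h2 : subst α β (x % omega0 ^ log omega0 x) = x % omega0 ^ log omega0 x :=
          IH _ hmlt fun hc => hn (inEp_mod h hx hc)
        rw [h1, h2]
        exact Ordinal.div_add_mod x _

/-! ### The `T` predicate : all epsilon subterms are `< μ` or equal to `α` -/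

def Tmem (α μ x : Ordinal.{0}) : Prop := ∀ y, InEp y x → y < μ ∨ y = α

lemma Tmem_log {α μ x : Ordinal.{0}} (hx : x ≠ 0) (hT : Tmem α μ x) :
    Tmem α μ (log omega0 x) := by
  by_cases h : omega0 ^ x = x
  · rwa [log_of_eps h]
  · intro y hy
    exact hT y (InEp.exp x _ _ y h (head_mem_CNF hx) hy)

lemma Tmem_mod {α μ x : Ordinal.{0}} (hx : x ≠ 0) (hT : Tmem α μ x) :
    Tmem α μ (x % omega0 ^ log omega0 x) := by
  by_cases h : omega0 ^ x = x
  · have hz : x % omega0 ^ log omega0 x = 0 := by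
      rw [log_of_eps h, h, Ordinal.mod_self]
    rw [hz]
    intro y hy
    exact absurd hy (fun hy => not_inEp_zero hy)
  · intro y hy
    exact hT y (inEp_mod h hx hy)

lemma Tmem_small {α β μ : Ordinal.{0}} (hμ : IsEps μ) (hβ : IsEps β) (hμα : μ ≤ α)
    {t : Ordinal.{0}} (hT : Tmem α μ t) (htα : t < α) :
    t < μ ∧ subst α β t = t := by
  have hno : ¬ InEp α t := fun hc => absurd (inEp_le hc) (not_le.mpr htα)
  have h1 : t < μ := by
    refine lt_of_Ep_lt hμ t fun y hy => ?_
    rcases hT y hy with h | rfl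
    · exact h
    · exact absurd hy hno
  exact ⟨h1, subst_eq_self hβ t hno⟩

lemma Tmem_lt_nextEps {α μ x : Ordinal.{0}} (hα : IsEps α) (hμα : μ ≤ α)
    (hT : Tmem α μ x) : x < nextEps α := by
  refine lt_of_Ep_lt (nextEps_isEps α) x fun y hy => ?_
  rcases hT y hy with h | h
  · exact (h.trans_le hμα).trans (lt_nextEps α)
  · exact h ▸ lt_nextEps α

lemma subst_gt {α β : Ordinal.{0}} (hα : IsEps α) (hβ : IsEps β) :
    ∀ x : Ordinal.{0}, α < x → x < nextEps α → β < subst α β x := by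
  intro x
  induction x using Ordinal.induction with
  | _ x IH =>
    intro hax hxn
    have hne : ¬ (omega0 ^ x = x) := fun he =>
      absurd (eps_le_of_lt_nextEps he hxn) (not_le.mpr hax)
    have hx0 : x ≠ 0 := ((eps_pos hα).trans hax).ne'
    have hE : α ≤ log omega0 x := by
      rw [← opow_le_iff_le_log one_lt_omega0 hx0, hα]
      exact hax.le
    rw [subst_decomp hβ hx0]
    set E := log omega0 x with hEdef
    set C := x / omega0 ^ E with hCdef
    have hC : 0 < C := div_opow_log_pos omega0 hx0
    rcases eq_or_lt_of_le hE with hEα | hEα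
    · have hsE : subst α β E = β := by rw [← hEα, subst_eps hα, if_pos rfl]
      rw [hsE, hβ]
      rcases eq_or_lt_of_le (Order.one_le_iff_pos.mpr hC) with hC1 | hC1
      · have hmod : x % omega0 ^ E ≠ 0 := by
          intro h0
          have hh := Ordinal.div_add_mod x (omega0 ^ E)
          rw [← hCdef, ← hC1, mul_one, h0, add_zero] at hh
          rw [← hh, ← hEα, hα] at hax
          exact lt_irrefl α hax
        have hpos : 0 < subst α β (x % omega0 ^ E) := subst_pos hβ hmod
        calc β = β * 1 + 0 := by rw [mul_one, add_zero]
          _ < β * 1 + subst α β (x % omega0 ^ E) := by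
              rw [add_lt_add_iff_left]; exact hpos
          _ ≤ β * C + subst α β (x % omega0 ^ E) := by
              rw [← hC1]
      · have hlt : β < β * C := by
          calc β = β * 1 := (mul_one β).symm
            _ < β * C := (mul_lt_mul_iff_right₀ (eps_pos hβ)).mpr hC1
        exact hlt.trans_le (le_self_add)
    · have hEx : E < x := log_lt_self hne hx0
      have hIH : β < subst α β E := IH E hEx hEα (hEx.trans hxn)
      calc β = omega0 ^ β := hβ.symm
        _ < omega0 ^ (subst α β E) := (opow_lt_opow_iff_right one_lt_omega0).mpr hIH
        _ ≤ omega0 ^ (subst α β E) * C := Ordinal.le_mul_left _ hC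
        _ ≤ _ := le_self_add

/-! ### Strict monotonicity and boundedness -/

lemma mono_bnd {α β μ : Ordinal.{0}} (hα : IsEps α) (hβ : IsEps β) (hμ : IsEps μ)
    (hμα : μ ≤ α) (hμβ : μ ≤ β) :
    ∀ b : Ordinal.{0}, Tmem α μ b →
      (∀ t, Tmem α μ t → t < b → subst α β t < subst α β b) ∧
      (∀ x, Tmem α μ x → x < omega0 ^ b → subst α β x < omega0 ^ subst α β b) := by
  intro b
  induction b using Ordinal.induction with
  | _ b IH =>
    intro hTb
    have mono : ∀ t, Tmem α μ t → t < b → subst α β t < subst α β b := by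
      intro t hTt htb
      by_cases hbe : omega0 ^ b = b
      · rcases hTb b (InEp.self b hbe) with hbμ | rfl
        · obtain ⟨h1, h2⟩ := Tmem_small hμ hβ hμα hTt (htb.trans_le (hbμ.le.trans hμα))
          rw [h2, subst_eps hbe,
            if_neg (show ¬ b = α by intro hh; rw [hh] at hbμ; exact absurd hbμ (not_lt.mpr hμα))]
          exact htb
        · obtain ⟨h1, h2⟩ := Tmem_small hμ hβ hμα hTt htb
          rw [h2, subst_eps hbe, if_pos rfl]
          exact h1.trans_le hμβ
      · have hb0 : b ≠ 0 := (pos_iff_ne_zero.mp ((show (0 : Ordinal.{0}) ≤ t from zero_le).trans_lt htb))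
        set E := log omega0 b with hEdef
        set C := b / omega0 ^ E with hCdef
        set R := b % omega0 ^ E with hRdef
        have hEb : E < b := log_lt_self hbe hb0
        have hTE : Tmem α μ E := Tmem_log hb0 hTb
        have hTR : Tmem α μ R := Tmem_mod hb0 hTb
        have hRE : R < omega0 ^ E := mod_lt b (opow_ne_zero _ omega0_ne_zero)
        have hRb : R < b := hRE.trans_le (opow_log_le_self omega0 hb0)
        have hCpos : 0 < C := div_opow_log_pos omega0 hb0
        rcases eq_or_ne t 0 with rfl | ht0
        · rw [subst_zero]; exact subst_pos hβ hb0
        set e := log omega0 t with hedef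
        set c := t / omega0 ^ e with hcdef
        set r := t % omega0 ^ e with hrdef
        have hTe : Tmem α μ e := Tmem_log ht0 hTt
        have hTr : Tmem α μ r := Tmem_mod ht0 hTt
        have hrE : r < omega0 ^ e := mod_lt t (opow_ne_zero _ omega0_ne_zero)
        have hee : e ≤ E := log_mono_right _ htb.le
        have hbd : subst α β b =
            omega0 ^ (subst α β E) * C + subst α β R := subst_decomp hβ hb0
        have htd : subst α β t =
            omega0 ^ (subst α β e) * c + subst α β r := subst_decomp hβ ht0
        rcases eq_or_lt_of_le hee with heE | heE
        · -- same leading exponent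
          have hsr : subst α β r < omega0 ^ (subst α β E) := by
            refine (IH E hEb hTE).2 r hTr ?_
            rw [← heE]; exact hrE
          have hcC : c ≤ C := by
            rw [hcdef, hCdef, ← heE]
            rw [Ordinal.le_div (opow_ne_zero _ omega0_ne_zero)]
            calc omega0 ^ e * (t / omega0 ^ e) ≤
                omega0 ^ e * (t / omega0 ^ e) + t % omega0 ^ e := le_self_add
              _ = t := Ordinal.div_add_mod t _
              _ ≤ b := htb.le
          rcases eq_or_lt_of_le hcC with hcC' | hcC'
          · -- equal coefficients: compare remainders
            have hrR : r < R := by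
              have htt : omega0 ^ e * c + r = t := Ordinal.div_add_mod t _
              have hbt : omega0 ^ E * C + R = b := Ordinal.div_add_mod b _
              have h1 : omega0 ^ E * C + r < omega0 ^ E * C + R := by
                rw [hbt]
                calc omega0 ^ E * C + r = omega0 ^ e * c + r := by rw [← heE, ← hcC']
                  _ = t := htt
                  _ < b := htb
              exact (add_lt_add_iff_left _).mp h1
            have := (IH R hRb hTR).1 r hTr hrR
            rw [htd, hbd, heE, hcC']
            rw [add_lt_add_iff_left]
            exact this
          · -- smaller coefficient
            rw [htd, hbd, heE]
            calc omega0 ^ (subst α β E) * c + subst α β r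
                < omega0 ^ (subst α β E) * c + omega0 ^ (subst α β E) := by
                  rw [add_lt_add_iff_left]; exact hsr
              _ = omega0 ^ (subst α β E) * (c + 1) := by rw [mul_add, mul_one]
              _ ≤ omega0 ^ (subst α β E) * C := by
                  refine mul_le_mul_right ?_ _
                  rw [Ordinal.add_one_eq_succ]
                  exact Order.succ_le_of_lt hcC'
              _ ≤ _ := le_self_add
        · -- strictly smaller exponent
          have ht' : t < omega0 ^ E := by
            calc t < omega0 ^ Order.succ e := lt_opow_succ_log_self one_lt_omega0 t
              _ ≤ omega0 ^ E := opow_le_opow_right omega0_pos (Order.succ_le_of_lt heE)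
          have h1 : subst α β t < omega0 ^ (subst α β E) := (IH E hEb hTE).2 t hTt ht'
          rw [hbd]
          calc subst α β t < omega0 ^ (subst α β E) := h1
            _ ≤ omega0 ^ (subst α β E) * C := Ordinal.le_mul_left _ hCpos
            _ ≤ _ := le_self_add
    refine ⟨mono, ?_⟩
    intro x hTx hx
    rcases eq_or_ne x 0 with rfl | hx0
    · rw [subst_zero]; exact opow_pos _ omega0_pos
    · have heb : log omega0 x < b := (lt_opow_iff_log_lt one_lt_omega0 hx0).mp hx
      set e := log omega0 x with hedef
      have hTe : Tmem α μ e := Tmem_log hx0 hTx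
      have hTr : Tmem α μ (x % omega0 ^ e) := Tmem_mod hx0 hTx
      have hse : subst α β e < subst α β b := mono e hTe heb
      have hsr : subst α β (x % omega0 ^ e) < omega0 ^ (subst α β e) :=
        (IH e heb hTe).2 _ hTr (mod_lt x (opow_ne_zero _ omega0_ne_zero))
      have hcw : x / omega0 ^ e < omega0 := div_opow_log_lt x one_lt_omega0
      rw [subst_decomp hβ hx0, ← hedef]
      calc omega0 ^ (subst α β e) * (x / omega0 ^ e) + subst α β (x % omega0 ^ e)
          < omega0 ^ (subst α β e) * (x / omega0 ^ e) + omega0 ^ (subst α β e) := by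
            rw [add_lt_add_iff_left]; exact hsr
        _ = omega0 ^ (subst α β e) * (x / omega0 ^ e + 1) := by rw [mul_add, mul_one]
        _ ≤ omega0 ^ (subst α β e) * omega0 := by
            refine mul_le_mul_right ?_ _
            rw [Ordinal.add_one_eq_succ]
            exact Order.succ_le_of_lt hcw
        _ = omega0 ^ Order.succ (subst α β e) := (opow_succ _ _).symm
        _ ≤ omega0 ^ (subst α β b) :=
            opow_le_opow_right omega0_pos (Order.succ_le_of_lt hse)

/-! ### `subst` stays below the next epsilon number -/

lemma subst_lt_next {α β μ : Ordinal.{0}} (hβ : IsEps β) (hμβ : μ ≤ β) :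
    ∀ x : Ordinal.{0}, Tmem α μ x → subst α β x < nextEps β := by
  intro x
  induction x using Ordinal.induction with
  | _ x IH =>
    intro hT
    by_cases h : omega0 ^ x = x
    · rw [subst_eps h]
      split_ifs with h'
      · exact lt_nextEps β
      · rcases hT x (InEp.self x h) with h1 | h2
        · exact (h1.trans_le hμβ).trans (lt_nextEps β)
        · exact absurd h2 h'
    · rcases eq_or_ne x 0 with rfl | hx0
      · rw [subst_zero]
        exact eps_pos (nextEps_isEps β)
      · have hmlt : x % omega0 ^ log omega0 x < x :=
          (mod_lt x (opow_ne_zero _ omega0_ne_zero)).trans_le (opow_log_le_self omega0 hx0)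
        have h1 : subst α β (log omega0 x) < nextEps β :=
          IH _ (log_lt_self h hx0) (Tmem_log hx0 hT)
        have h2 : subst α β (x % omega0 ^ log omega0 x) < nextEps β :=
          IH _ hmlt (Tmem_mod hx0 hT)
        have hcw : x / omega0 ^ log omega0 x < omega0 := div_opow_log_lt x one_lt_omega0
        have hterm : omega0 ^ (subst α β (log omega0 x)) * (x / omega0 ^ log omega0 x)
            < omega0 ^ nextEps β := by
          calc omega0 ^ (subst α β (log omega0 x)) * (x / omega0 ^ log omega0 x)
              < omega0 ^ (subst α β (log omega0 x)) * omega0 :=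
                (mul_lt_mul_iff_right₀ (opow_pos _ omega0_pos)).mpr hcw
            _ = omega0 ^ Order.succ (subst α β (log omega0 x)) := (opow_succ _ _).symm
            _ ≤ omega0 ^ nextEps β := opow_le_opow_right omega0_pos (Order.succ_le_of_lt h1)
        have h2' : subst α β (x % omega0 ^ log omega0 x) < omega0 ^ nextEps β := by
          rw [nextEps_isEps β]; exact h2
        have := principal_add_omega0_opow (nextEps β) hterm h2'
        rw [nextEps_isEps β] at this
        rw [subst_decomp hβ hx0]
        exact this

/-! ### CNF of a decomposed value -/

lemma log_opow_mul_add {a c r : Ordinal.{0}} (hc : 0 < c) (hcw : c < omega0)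
    (hr : r < omega0 ^ a) : log omega0 (omega0 ^ a * c + r) = a := by
  have h0 : omega0 ^ a * c + r ≠ 0 := by
    refine (pos_iff_ne_zero.mp ?_)
    exact lt_of_lt_of_le (mul_pos (opow_pos _ omega0_pos) hc) (le_self_add)
  apply le_antisymm
  · have hlt : omega0 ^ a * c + r < omega0 ^ Order.succ a := by
      calc omega0 ^ a * c + r < omega0 ^ a * c + omega0 ^ a := by
            rw [add_lt_add_iff_left]; exact hr
        _ = omega0 ^ a * (c + 1) := by rw [mul_add, mul_one]
        _ ≤ omega0 ^ a * omega0 := by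
            refine mul_le_mul_right ?_ _
            rw [Ordinal.add_one_eq_succ]
            exact Order.succ_le_of_lt hcw
        _ = omega0 ^ Order.succ a := (opow_succ _ _).symm
    have := (lt_opow_iff_log_lt one_lt_omega0 h0).mp hlt
    exact Order.lt_succ_iff.mp this
  · rw [← opow_le_iff_le_log one_lt_omega0 h0]
    calc omega0 ^ a ≤ omega0 ^ a * c := Ordinal.le_mul_left _ hc
      _ ≤ _ := le_self_add

lemma div_opow_mul_add {a c r : Ordinal.{0}} (hr : r < omega0 ^ a) :
    (omega0 ^ a * c + r) / omega0 ^ a = c := by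
  rw [Ordinal.mul_add_div c (opow_ne_zero _ omega0_ne_zero),
    Ordinal.div_eq_zero_of_lt hr, add_zero]

lemma mod_opow_mul_add {a c r : Ordinal.{0}} (hr : r < omega0 ^ a) :
    (omega0 ^ a * c + r) % omega0 ^ a = r := by
  rw [Ordinal.mul_add_mod_self, Ordinal.mod_eq_of_lt hr]

lemma CNF_opow_mul_add {a c r : Ordinal.{0}} (hc : 0 < c) (hcw : c < omega0)
    (hr : r < omega0 ^ a) :
    CNF omega0 (omega0 ^ a * c + r) = (a, c) :: CNF omega0 r := by
  have h0 : omega0 ^ a * c + r ≠ 0 := by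
    refine (pos_iff_ne_zero.mp ?_)
    exact lt_of_lt_of_le (mul_pos (opow_pos _ omega0_pos) hc) (le_self_add)
  rw [CNF.ne_zero h0, log_opow_mul_add hc hcw hr, div_opow_mul_add hr, mod_opow_mul_add hr]

/-! ### `subst` of a non-epsilon number is non-epsilon -/

lemma subst_not_eps {α β μ : Ordinal.{0}} (hα : IsEps α) (hβ : IsEps β) (hμ : IsEps μ)
    (hμα : μ ≤ α) (hμβ : μ ≤ β) :
    ∀ x : Ordinal.{0}, Tmem α μ x → ¬ (omega0 ^ x = x) →
      ¬ (omega0 ^ (subst α β x) = subst α β x) := by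
  intro x
  induction x using Ordinal.induction with
  | _ x IH =>
    intro hT hne
    rcases eq_or_ne x 0 with rfl | hx0
    · rw [subst_zero]; simp
    set e := log omega0 x with hedef
    set c := x / omega0 ^ e with hcdef
    set r := x % omega0 ^ e with hrdef
    have hTe : Tmem α μ e := Tmem_log hx0 hT
    have hTr : Tmem α μ r := Tmem_mod hx0 hT
    have hc : 0 < c := div_opow_log_pos omega0 hx0
    have hcw : c < omega0 := div_opow_log_lt x one_lt_omega0
    have hsr : subst α β r < omega0 ^ (subst α β e) :=
      (mono_bnd hα hβ hμ hμα hμβ e hTe).2 r hTr (mod_lt x (opow_ne_zero _ omega0_ne_zero))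
    have hd : subst α β x = omega0 ^ (subst α β e) * c + subst α β r := subst_decomp hβ hx0
    intro hcontra
    have hspos : 0 < subst α β x := subst_pos hβ hx0
    have hlog : log omega0 (subst α β x) = subst α β e := by
      rw [hd]; exact log_opow_mul_add hc hcw hsr
    have hlog2 : log omega0 (subst α β x) = subst α β x := log_of_eps hcontra
    have hseq : subst α β e = subst α β x := by rw [← hlog, hlog2]
    -- subst x = ω^(subst x)·c + sr = (subst x)·c + sr
    have hx' : subst α β x = subst α β x * c + subst α β r := by
      conv_lhs => rw [hd]
      rw [← hseq]
      rw [show omega0 ^ subst α β e = subst α β e from by rw [hseq]; exact hcontra]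
    rcases eq_or_lt_of_le (Order.one_le_iff_pos.mpr hc) with hc1 | hc1
    · -- c = 1 : then subst r = 0 hence r = 0, and x = ω^e
      rw [← hc1, mul_one] at hx'
      have hr0 : subst α β r = 0 := by
        have := hx'
        conv_lhs at this => rw [← add_zero (subst α β x)]
        exact ((add_right_inj _).mp this).symm
      have hrz : r = 0 := by
        by_contra hrz
        exact (subst_pos hβ hrz).ne' hr0
      have hxe : x = omega0 ^ e := by
        have := Ordinal.div_add_mod x (omega0 ^ e)
        rw [← hcdef, ← hrdef, ← hc1, mul_one, hrz, add_zero] at this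
        exact this.symm
      have hene : ¬ (omega0 ^ e = e) := by
        intro hee
        rw [hxe, hee] at hne
        exact hne hee
      have := IH e (log_lt_self hne hx0) hTe hene
      rw [hseq] at this
      exact this hcontra
    · -- c ≥ 2 : contradiction with subst x = subst x * c + ...
      have h2 : subst α β x * 2 ≤ subst α β x * c := by
        refine mul_le_mul_right ?_ _
        rw [show (2 : Ordinal.{0}) = 1 + 1 from (one_add_one_eq_two).symm]
        rw [Ordinal.add_one_eq_succ]
        exact Order.succ_le_of_lt hc1
      have h3 : subst α β x < subst α β x * c := by
        calc subst α β x < subst α β x + subst α β x := by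
              conv_lhs => rw [← add_zero (subst α β x)]
              rw [add_lt_add_iff_left]
              exact hspos
          _ = subst α β x * 2 := by
              rw [show (2 : Ordinal.{0}) = 1 + 1 from (one_add_one_eq_two).symm]
              rw [mul_add, mul_one]
          _ ≤ subst α β x * c := h2
      have h4 : subst α β x * c ≤ subst α β x := by
        conv_rhs => rw [hx']
        exact le_self_add
      exact absurd (h3.trans_le h4) (lt_irrefl _)

/-! ### `Ep` of a substituted value -/

lemma Tmem_subst {α β μ : Ordinal.{0}} (hα : IsEps α) (hβ : IsEps β) (hμ : IsEps μ)
    (hμα : μ ≤ α) (hμβ : μ ≤ β) :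
    ∀ x : Ordinal.{0}, Tmem α μ x → Tmem β μ (subst α β x) := by
  intro x
  induction x using Ordinal.induction with
  | _ x IH =>
    intro hT
    by_cases h : omega0 ^ x = x
    · rw [subst_eps h]
      split_ifs with h'
      · intro y hy
        rw [inEp_eps_iff hβ] at hy
        exact Or.inr hy
      · intro y hy
        rw [inEp_eps_iff h] at hy
        rcases hT x (InEp.self x h) with h1 | h2
        · exact Or.inl (by rw [hy]; exact h1)
        · exact absurd h2 h'
    · rcases eq_or_ne x 0 with rfl | hx0
      · rw [subst_zero]
        intro y hy
        exact absurd hy not_inEp_zero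
      set e := log omega0 x with hedef
      set c := x / omega0 ^ e with hcdef
      set r := x % omega0 ^ e with hrdef
      have hTe : Tmem α μ e := Tmem_log hx0 hT
      have hTr : Tmem α μ r := Tmem_mod hx0 hT
      have helt : e < x := log_lt_self h hx0
      have hrlt : r < x :=
        (mod_lt x (opow_ne_zero _ omega0_ne_zero)).trans_le (opow_log_le_self omega0 hx0)
      have hc : 0 < c := div_opow_log_pos omega0 hx0
      have hcw : c < omega0 := div_opow_log_lt x one_lt_omega0
      have hsr : subst α β r < omega0 ^ (subst α β e) :=
        (mono_bnd hα hβ hμ hμα hμβ e hTe).2 r hTr (mod_lt x (opow_ne_zero _ omega0_ne_zero))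
      have hd : subst α β x = omega0 ^ (subst α β e) * c + subst α β r := subst_decomp hβ hx0
      have hCNF : CNF omega0 (subst α β x) = (subst α β e, c) :: CNF omega0 (subst α β r) := by
        rw [hd]; exact CNF_opow_mul_add hc hcw hsr
      have hsne : ¬ (omega0 ^ (subst α β x) = subst α β x) :=
        subst_not_eps hα hβ hμ hμα hμβ x hT h
      intro y hy
      obtain ⟨E', C', hmem, hyE⟩ := inEp_of_not_eps hsne hy
      rw [hCNF] at hmem
      rcases List.mem_cons.mp hmem with heq | hmem'
      · have : E' = subst α β e := (Prod.mk.injEq _ _ _ _ ▸ heq).1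
        rw [this] at hyE
        exact IH e helt hTe y hyE
      · -- the entry comes from the CNF of `subst α β r`
        have hyr : InEp y (subst α β r) := by
          by_cases hre : omega0 ^ (subst α β r) = subst α β r
          · have : CNF omega0 (subst α β r) = [(subst α β r, 1)] := CNF_of_eps hre
            rw [this] at hmem'
            have hE' : E' = subst α β r := by
              rcases List.mem_singleton.mp hmem' with h''
              exact (Prod.mk.injEq _ _ _ _ ▸ h'').1
            rw [hE'] at hyE
            exact hyE
          · exact InEp.exp _ E' C' y hre hmem' hyE
        exact IH r hrlt hTr y hyr

/-! ### `subst` is an involution between the two substitution directions -/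

lemma subst_subst {α β μ : Ordinal.{0}} (hα : IsEps α) (hβ : IsEps β) (hμ : IsEps μ)
    (hμα : μ ≤ α) (hμβ : μ ≤ β) :
    ∀ x : Ordinal.{0}, Tmem α μ x → subst β α (subst α β x) = x := by
  intro x
  induction x using Ordinal.induction with
  | _ x IH =>
    intro hT
    by_cases h : omega0 ^ x = x
    · rw [subst_eps h]
      split_ifs with h'
      · rw [subst_eps hβ, if_pos rfl, h']
      · rw [subst_eps h, if_neg]
        rcases hT x (InEp.self x h) with h1 | h2
        · intro hxβ
          rw [hxβ] at h1
          exact absurd hμβ (not_le.mpr h1)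
        · exact absurd h2 h'
    · rcases eq_or_ne x 0 with rfl | hx0
      · rw [subst_zero, subst_zero]
      set e := log omega0 x with hedef
      set c := x / omega0 ^ e with hcdef
      set r := x % omega0 ^ e with hrdef
      have hTe : Tmem α μ e := Tmem_log hx0 hT
      have hTr : Tmem α μ r := Tmem_mod hx0 hT
      have helt : e < x := log_lt_self h hx0
      have hrlt : r < x :=
        (mod_lt x (opow_ne_zero _ omega0_ne_zero)).trans_le (opow_log_le_self omega0 hx0)
      have hc : 0 < c := div_opow_log_pos omega0 hx0
      have hcw : c < omega0 := div_opow_log_lt x one_lt_omega0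
      have hsr : subst α β r < omega0 ^ (subst α β e) :=
        (mono_bnd hα hβ hμ hμα hμβ e hTe).2 r hTr (mod_lt x (opow_ne_zero _ omega0_ne_zero))
      have hd : subst α β x = omega0 ^ (subst α β e) * c + subst α β r := subst_decomp hβ hx0
      have hs0 : subst α β x ≠ 0 := (subst_pos hβ hx0).ne'
      have hlog : log omega0 (subst α β x) = subst α β e := by
        rw [hd]; exact log_opow_mul_add hc hcw hsr
      have hdiv : subst α β x / omega0 ^ (subst α β e) = c := by
        rw [hd]; exact div_opow_mul_add hsr
      have hmod : subst α β x % omega0 ^ (subst α β e) = subst α β r := by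
        rw [hd]; exact mod_opow_mul_add hsr
      rw [subst_decomp hα hs0, hlog, hdiv, hmod, IH e helt hTe, IH r hrlt hTr]
      exact Ordinal.div_add_mod x _

end Aux

/-- For κ an epsilon number which is an uncountable regular cardinal and σ < κ an
epsilon number, t ↦ t[κ := σ] is an order isomorphism from M(κ, σ) ∩ [κ, κ⁺)
onto [σ, σ⁺); hence these sets are equinumerous, of cardinality < κ. -/
theorem subst_orderIso_card (κ σ : Ordinal.{0}) (hκ : IsEps κ)
    (hord : κ.card.ord = κ) (hreg : κ.card.IsRegular)
    (hunc : Cardinal.aleph0 < κ.card) (hσ : IsEps σ) (hσκ : σ < κ) :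
    (∀ t ∈ MSet κ σ ∩ Set.Ico κ (nextEps κ),
        subst κ σ t ∈ Set.Ico σ (nextEps σ)) ∧
    (∀ t ∈ MSet κ σ ∩ Set.Ico κ (nextEps κ),
      ∀ t' ∈ MSet κ σ ∩ Set.Ico κ (nextEps κ),
        (t < t' ↔ subst κ σ t < subst κ σ t')) ∧
    (∀ r ∈ Set.Ico σ (nextEps σ),
        ∃ t ∈ MSet κ σ ∩ Set.Ico κ (nextEps κ), subst κ σ t = r) ∧
    Cardinal.mk ↥(MSet κ σ ∩ Set.Ico κ (nextEps κ)) =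
      Cardinal.mk ↥(Set.Ico σ (nextEps σ)) ∧
    Cardinal.mk ↥(Set.Ico σ (nextEps σ)) < Cardinal.lift.{1} κ.card := by
  have hσκ' : σ ≤ κ := hσκ.le
  -- members of the source set satisfy `Tmem κ σ`
  have hTset : ∀ t ∈ MSet κ σ ∩ Set.Ico κ (nextEps κ), Tmem κ σ t := by
    rintro t ⟨⟨htn, hsub⟩, htκ, htn'⟩ y hy
    have hyeps := inEp_isEps hy
    have hyl : y ≤ κ := eps_le_of_lt_nextEps hyeps ((inEp_le hy).trans_lt htn)
    rcases lt_or_eq_of_le hyl with hlt | heq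
    · exact Or.inl (hsub ⟨hy, hlt⟩)
    · exact Or.inr heq
  -- members of `Ico σ (nextEps σ)` satisfy `Tmem σ σ`
  have hTset' : ∀ r ∈ Set.Ico σ (nextEps σ), Tmem σ σ r := by
    rintro r ⟨hr1, hr2⟩ y hy
    have hyl : y ≤ σ := eps_le_of_lt_nextEps (inEp_isEps hy) ((inEp_le hy).trans_lt hr2)
    rcases lt_or_eq_of_le hyl with hlt | heq
    · exact Or.inl hlt
    · exact Or.inr heq
  -- forward membership
  have hfwd : ∀ t ∈ MSet κ σ ∩ Set.Ico κ (nextEps κ),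
      subst κ σ t ∈ Set.Ico σ (nextEps σ) := by
    intro t ht
    have hT := hTset t ht
    obtain ⟨⟨htn, hsub⟩, htκ, htn'⟩ := ht
    constructor
    · rcases eq_or_lt_of_le htκ with heq | hlt
      · rw [← heq, subst_eps hκ, if_pos rfl]
      · exact (subst_gt hκ hσ t hlt htn').le
    · exact subst_lt_next hσ le_rfl t hT
  -- backward membership
  have hbwd : ∀ r ∈ Set.Ico σ (nextEps σ),
      subst σ κ r ∈ MSet κ σ ∩ Set.Ico κ (nextEps κ) := by
    intro r hr
    obtain ⟨hr1, hr2⟩ := hr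
    have hTr : Tmem σ σ r := hTset' r ⟨hr1, hr2⟩
    have hTt : Tmem κ σ (subst σ κ r) := Tmem_subst hσ hκ hσ le_rfl hσκ' r hTr
    have htlt : subst σ κ r < nextEps κ := subst_lt_next hκ hσκ' r hTr
    have hsin : InEp σ r := by
      by_contra hni
      have : r < σ := by
        refine lt_of_Ep_lt hσ r fun y hy => ?_
        rcases hTr y hy with h1 | h2
        · exact h1
        · exact absurd (h2 ▸ hy) hni
      exact absurd hr1 (not_le.mpr this)
    have hge : κ ≤ subst σ κ r := subst_ge hκ r hsin
    refine ⟨⟨htlt, ?_⟩, hge, htlt⟩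
    rintro y ⟨hy1, hy2⟩
    rcases hTt y hy1 with h1 | h2
    · exact h1
    · exact absurd hy2 (not_lt.mpr (le_of_eq h2.symm))
  -- the inverse computations
  have hinv1 : ∀ t ∈ MSet κ σ ∩ Set.Ico κ (nextEps κ), subst σ κ (subst κ σ t) = t := by
    intro t ht
    exact subst_subst hκ hσ hσ hσκ' le_rfl t (hTset t ht)
  have hinv2 : ∀ r ∈ Set.Ico σ (nextEps σ), subst κ σ (subst σ κ r) = r := by
    intro r hr
    exact subst_subst hσ hκ hσ le_rfl hσκ' r (hTset' r hr)
  -- monotonicity iff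
  have hmono : ∀ t ∈ MSet κ σ ∩ Set.Ico κ (nextEps κ),
      ∀ t' ∈ MSet κ σ ∩ Set.Ico κ (nextEps κ),
        (t < t' ↔ subst κ σ t < subst κ σ t') := by
    intro t ht t' ht'
    have hT := hTset t ht
    have hT' := hTset t' ht'
    constructor
    · intro h
      exact (mono_bnd hκ hσ hσ hσκ' le_rfl t' hT').1 t hT h
    · intro h
      by_contra hn
      rcases eq_or_lt_of_le (not_lt.mp hn) with heq | hlt
      · rw [heq] at h; exact lt_irrefl _ h
      · exact absurd ((mono_bnd hκ hσ hσ hσκ' le_rfl t hT).1 t' hT' hlt) (not_lt.mpr h.le)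
  -- surjectivity
  have hsurj : ∀ r ∈ Set.Ico σ (nextEps σ),
      ∃ t ∈ MSet κ σ ∩ Set.Ico κ (nextEps κ), subst κ σ t = r := by
    intro r hr
    exact ⟨subst σ κ r, hbwd r hr, hinv2 r hr⟩
  -- the equivalence
  have hequiv : Cardinal.mk ↥(MSet κ σ ∩ Set.Ico κ (nextEps κ)) =
      Cardinal.mk ↥(Set.Ico σ (nextEps σ)) := by
    refine Cardinal.mk_congr ⟨fun t => ⟨subst κ σ t.1, hfwd t.1 t.2⟩,
      fun r => ⟨subst σ κ r.1, hbwd r.1 r.2⟩, ?_, ?_⟩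
    · intro t; exact Subtype.ext (hinv1 t.1 t.2)
    · intro r; exact Subtype.ext (hinv2 r.1 r.2)
  -- cardinality bound
  have hnext : nextEps σ < κ := by
    have hlim : Order.IsSuccLimit (κ.card.ord) := Cardinal.isSuccLimit_ord hreg.aleph0_le
    rw [hord] at hlim
    have hσ1 : σ + 1 < κ := by
      rw [Ordinal.add_one_eq_succ]
      exact hlim.succ_lt hσκ
    have hn : nfp (omega0 ^ ·) (σ + 1) < κ := by
      have hκcof : Cardinal.aleph0 < Ordinal.cof κ := by
        conv_rhs => rw [← hord]
        rw [hreg.cof_eq]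
        exact hunc
      refine nfp_lt_ord hκcof (fun i hi => ?_) hσ1
      calc omega0 ^ i < omega0 ^ κ := (opow_lt_opow_iff_right one_lt_omega0).mpr hi
        _ = κ := hκ
    refine lt_of_le_of_lt ?_ hn
    refine nextEps_le (Ordinal.nfp_fp (isNormal_opow one_lt_omega0) _) ?_
    exact (lt_add_one σ).trans_le (le_nfp _ _)
  have hcard : Cardinal.mk ↥(Set.Ico σ (nextEps σ)) < Cardinal.lift.{1} κ.card := by
    have h1 : Cardinal.mk ↥(Set.Ico σ (nextEps σ)) ≤
        Cardinal.mk ↥(Set.Iio (nextEps σ)) :=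
      Cardinal.mk_le_mk_of_subset Set.Ico_subset_Iio_self
    have h2 : Cardinal.mk ↥(Set.Iio (nextEps σ)) = Cardinal.lift.{1} (nextEps σ).card :=
      Cardinal.mk_Iio_ordinal (nextEps σ)
    have h3 : (nextEps σ).card < κ.card := by
      refine Cardinal.lt_ord.mp ?_
      rw [hord]
      exact hnext
    calc Cardinal.mk ↥(Set.Ico σ (nextEps σ)) ≤
        Cardinal.lift.{1} (nextEps σ).card := h2 ▸ h1
      _ < Cardinal.lift.{1} κ.card := Cardinal.lift_lt.mpr h3
  exact ⟨hfwd, hmono, hsurj, hequiv, hcard⟩
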